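/- Let f be a nonzero polynomial in n complex variables. Then the amoeba 𝒜(f) = Log(V_f) is a closed subset of ℝⁿ and its complement ℝⁿ ∖ 𝒜(f) is nonempty. -/

import Mathlib

open MeasureTheory Filter

/-- The logarithmic moment map `Log : (ℂ*)ⁿ → ℝⁿ`. -/
noncomputable def LogMap {n : ℕ} (z : Fin n → ℂ) : Fin n → ℝ :=
  fun i => Real.log (‖z i‖)

/-- The amoeba of a polynomial `f`: the image under `Log` of the zero set of `f`
in the complex torus `(ℂ*)ⁿ`. -/
noncomputable def amoeba {n : ℕ} (f : MvPolynomial (Fin n) ℂ) : Set (Fin n → ℝ) :=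
  LogMap '' {z : Fin n → ℂ | (∀ i, z i ≠ 0) ∧ MvPolynomial.eval z f = 0}

noncomputable def amoTorus {n : ℕ} (p : (Fin n → ℝ) × (Fin n → Metric.sphere (0:ℂ) 1)) :
    Fin n → ℂ := fun i => (Real.exp (p.1 i) : ℂ) * (p.2 i : ℂ)

lemma amoTorus_continuous {n : ℕ} : Continuous (amoTorus (n := n)) := by
  unfold amoTorus
  refine continuous_pi fun i => Continuous.mul ?_ ?_
  · exact Complex.continuous_ofReal.comp (Real.continuous_exp.comp
      ((continuous_apply i).comp continuous_fst))
  · exact continuous_subtype_val.comp ((continuous_apply i).comp continuous_snd)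

lemma amoeba_eq {n : ℕ} (f : MvPolynomial (Fin n) ℂ) :
    amoeba f = Prod.fst '' (amoTorus ⁻¹' {z : Fin n → ℂ | MvPolynomial.eval z f = 0}) := by
  ext x
  constructor
  · rintro ⟨z, ⟨hz0, hzf⟩, rfl⟩
    have habs : ∀ i, ‖z i‖ ≠ 0 := fun i => by
      simpa [norm_eq_zero] using hz0 i
    refine ⟨⟨LogMap z, fun i => ⟨z i / ‖z i‖, ?_⟩⟩, ?_, rfl⟩
    · rw [mem_sphere_zero_iff_norm]
      simp [norm_div, map_div₀, div_self (habs _)]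
    · have : amoTorus (⟨LogMap z, fun i => ⟨z i / ‖z i‖, by
        rw [mem_sphere_zero_iff_norm]
        simp [norm_div, map_div₀, div_self (habs _)]⟩⟩) = z := by
        funext i
        simp only [amoTorus, LogMap]
        rw [Real.exp_log ((norm_nonneg _).lt_of_ne (Ne.symm (habs i)))]
        rw [mul_div_cancel₀]
        exact_mod_cast habs i
      simp only [Set.mem_preimage, Set.mem_setOf_eq, this, hzf]
  · rintro ⟨⟨x', θ⟩, hp, rfl⟩
    simp only [Set.mem_preimage, Set.mem_setOf_eq] at hp
    have hθ : ∀ i, ‖(θ i : ℂ)‖ = 1 := fun i => by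
      have := (θ i).2
      rw [mem_sphere_zero_iff_norm] at this
      exact this
    refine ⟨amoTorus ⟨x', θ⟩, ⟨fun i => ?_, hp⟩, ?_⟩
    · simp only [amoTorus]
      refine mul_ne_zero ?_ ?_
      · exact_mod_cast Real.exp_ne_zero _
      · intro h
        have := hθ i
        rw [h] at this
        simp at this
    · funext i
      simp only [LogMap, amoTorus, norm_mul, hθ, Complex.norm_real, Real.norm_eq_abs,
        abs_of_pos (Real.exp_pos _), mul_one, Real.log_exp]

lemma amoeba_isClosed {n : ℕ} (f : MvPolynomial (Fin n) ℂ) : IsClosed (amoeba f) := by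
  rw [amoeba_eq]
  exact isClosedMap_fst_of_compactSpace _
    ((isClosed_singleton.preimage (MvPolynomial.continuous_eval f)).preimage amoTorus_continuous)

lemma amoeba_null_pair {n : ℕ} (a b : Fin n →₀ ℕ) (hab : a ≠ b) :
    volume {v : Fin n → ℝ | (∑ i, v i * (a i : ℝ)) = ∑ i, v i * (b i : ℝ)} = 0 := by
  set c : Fin n → ℝ := fun i => (a i : ℝ) - (b i : ℝ) with hc
  set ℓ : (Fin n → ℝ) →ₗ[ℝ] ℝ := ∑ i, c i • (LinearMap.proj i) with hℓ
  have hℓ_apply : ∀ v, ℓ v = ∑ i, c i * v i := by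
    intro v
    simp [hℓ, LinearMap.sum_apply]
  obtain ⟨i, hi⟩ : ∃ i, a i ≠ b i := by
    by_contra h
    push_neg at h
    exact hab (Finsupp.ext h)
  have hci : c i ≠ 0 := sub_ne_zero.mpr (by exact_mod_cast hi)
  have hker : LinearMap.ker ℓ ≠ ⊤ := by
    intro h
    have : ℓ (Pi.single i 1) = 0 := by
      have : Pi.single i 1 ∈ LinearMap.ker ℓ := by rw [h]; trivial
      exact this
    rw [hℓ_apply] at this
    simp [Pi.single_apply, mul_ite, Finset.sum_ite_eq'] at this
    exact hci this
  have hset : {v : Fin n → ℝ | (∑ i, v i * (a i : ℝ)) = ∑ i, v i * (b i : ℝ)}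
      = (LinearMap.ker ℓ : Set (Fin n → ℝ)) := by
    ext v
    simp only [Set.mem_setOf_eq, SetLike.mem_coe, LinearMap.mem_ker, hℓ_apply, hc,
      sub_mul, Finset.sum_sub_distrib, sub_eq_zero]
    constructor
    · intro h; rw [Finset.sum_congr rfl (fun i _ => mul_comm ((a i : ℝ)) (v i)),
        Finset.sum_congr rfl (fun i _ => mul_comm ((b i : ℝ)) (v i))]; exact h
    · intro h; rw [Finset.sum_congr rfl (fun i _ => mul_comm (v i) ((a i : ℝ))),
        Finset.sum_congr rfl (fun i _ => mul_comm (v i) ((b i : ℝ)))]; exact h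
  rw [hset]
  exact Measure.addHaar_submodule _ _ hker

lemma amoeba_exists_sep {n : ℕ} (S : Finset (Fin n →₀ ℕ)) :
    ∃ v : Fin n → ℝ, ∀ a ∈ S, ∀ b ∈ S, a ≠ b →
      (∑ i, v i * (a i : ℝ)) ≠ ∑ i, v i * (b i : ℝ) := by
  set B : Set (Fin n → ℝ) :=
    ⋃ a ∈ (S : Set (Fin n →₀ ℕ)), ⋃ b ∈ (S : Set (Fin n →₀ ℕ)),
      {v | a ≠ b ∧ (∑ i, v i * (a i : ℝ)) = ∑ i, v i * (b i : ℝ)} with hB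
  have hBnull : volume B = 0 := by
    refine (measure_biUnion_null_iff S.countable_toSet).mpr fun a _ => ?_
    refine (measure_biUnion_null_iff S.countable_toSet).mpr fun b _ => ?_
    rcases eq_or_ne a b with rfl | hab
    · convert measure_empty (μ := volume)
      ext v; simp
    · exact measure_mono_null (fun v hv => hv.2) (amoeba_null_pair a b hab)
  have : B ≠ Set.univ := by
    intro h
    have h1 : (0:ENNReal) < volume (Set.univ : Set (Fin n → ℝ)) :=
      isOpen_univ.measure_pos volume Set.univ_nonempty
    rw [← h, hBnull] at h1
    exact lt_irrefl _ h1
  obtain ⟨v, hv⟩ := Set.ne_univ_iff_exists_notMem _ |>.mp this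
  refine ⟨v, fun a ha b hb hab heq => hv ?_⟩
  simp only [hB, Set.mem_iUnion]
  exact ⟨a, ha, b, hb, hab, heq⟩

lemma amoeba_compl_nonempty {n : ℕ} (f : MvPolynomial (Fin n) ℂ) (hf : f ≠ 0) :
    (amoeba f)ᶜ.Nonempty := by
  set S := f.support with hSdef
  have hS : S.Nonempty := Finset.nonempty_iff_ne_empty.mpr
    (fun h => hf (MvPolynomial.support_eq_empty.mp h))
  obtain ⟨v, hv⟩ := amoeba_exists_sep S
  set L : (Fin n →₀ ℕ) → ℝ := fun a => ∑ i, v i * (a i : ℝ) with hLdef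
  obtain ⟨A, hA, hAmax⟩ := S.exists_max_image L hS
  have hAstrict : ∀ a ∈ S, a ≠ A → L a < L A :=
    fun a ha hne => (hAmax a ha).lt_of_ne (hv a ha A hA hne)
  have hcA : f.coeff A ≠ 0 := MvPolynomial.mem_support_iff.mp hA
  set cA := ‖f.coeff A‖ with hcAdef
  have hcApos : 0 < cA := norm_pos_iff.mpr hcA
  set ε := cA / S.card with hεdef
  have hεpos : 0 < ε := div_pos hcApos (Nat.cast_pos.mpr hS.card_pos)
  have hev : ∀ᶠ t in atTop, ∀ a ∈ S.erase A,
      ‖f.coeff a‖ * Real.exp (t * (L a - L A)) < ε := by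
    rw [Filter.eventually_all_finset]
    intro a ha
    have hd : L a - L A < 0 := sub_neg.mpr
      (hAstrict a (Finset.mem_of_mem_erase ha) (Finset.ne_of_mem_erase ha))
    have h1 : Tendsto (fun t : ℝ => ‖f.coeff a‖ * Real.exp (t * (L a - L A)))
        atTop (nhds 0) := by
      have h2 := Real.tendsto_exp_atBot.comp
        (Filter.Tendsto.atTop_mul_const_of_neg hd tendsto_id)
      simpa using h2.const_mul (‖f.coeff a‖)
    exact h1.eventually (gt_mem_nhds hεpos)
  obtain ⟨t, ht⟩ := hev.exists
  refine ⟨fun i => t * v i, fun hx => ?_⟩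
  obtain ⟨z, ⟨hz0, hzf⟩, hLog⟩ := hx
  have habs : ∀ i, ‖z i‖ = Real.exp (t * v i) := by
    intro i
    have h1 : Real.log (‖z i‖) = t * v i := by
      have := congrFun hLog i
      simpa [LogMap] using this
    have h2 : 0 < ‖z i‖ := norm_pos_iff.mpr (hz0 i)
    rw [← h1, Real.exp_log h2]
  have hprod : ∀ a : Fin n →₀ ℕ, ‖∏ i, z i ^ a i‖ = Real.exp (t * L a) := by
    intro a
    rw [norm_prod]
    have h3 : ∀ i, ‖z i ^ a i‖ = Real.exp ((a i : ℝ) * (t * v i)) := by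
      intro i; rw [norm_pow, habs, ← Real.exp_nat_mul]
    rw [Finset.prod_congr rfl (fun i _ => h3 i), ← Real.exp_sum]
    congr 1
    rw [hLdef, Finset.mul_sum]
    exact Finset.sum_congr rfl fun i _ => by ring
  have heval := MvPolynomial.eval_eq' z f
  rw [hzf] at heval
  have hsplit : f.coeff A * ∏ i, z i ^ A i = -∑ a ∈ S.erase A, f.coeff a * ∏ i, z i ^ a i := by
    have := Finset.add_sum_erase S (fun a => f.coeff a * ∏ i, z i ^ a i) hA
    rw [← hSdef] at heval
    rw [heval.symm] at this
    exact eq_neg_of_add_eq_zero_left this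
  have hkey : cA * Real.exp (t * L A)
      ≤ ∑ a ∈ S.erase A, ‖f.coeff a‖ * Real.exp (t * L a) := by
    calc cA * Real.exp (t * L A) = ‖f.coeff A * ∏ i, z i ^ A i‖ := by
          rw [norm_mul, hprod, hcAdef]
    _ = ‖∑ a ∈ S.erase A, f.coeff a * ∏ i, z i ^ a i‖ := by
          rw [hsplit, norm_neg]
    _ ≤ ∑ a ∈ S.erase A, ‖f.coeff a * ∏ i, z i ^ a i‖ :=
          norm_sum_le _ _
    _ = ∑ a ∈ S.erase A, ‖f.coeff a‖ * Real.exp (t * L a) :=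
          Finset.sum_congr rfl fun a _ => by rw [norm_mul, hprod]
  have hterm : ∀ a ∈ S.erase A,
      ‖f.coeff a‖ * Real.exp (t * L a) ≤ ε * Real.exp (t * L A) := by
    intro a ha
    have hE : Real.exp (t * L a) = Real.exp (t * (L a - L A)) * Real.exp (t * L A) := by
      rw [← Real.exp_add]; ring_nf
    rw [hE, ← mul_assoc]
    exact mul_le_mul_of_nonneg_right (le_of_lt (ht a ha)) (Real.exp_pos _).le
  have hsum : ∑ a ∈ S.erase A, ‖f.coeff a‖ * Real.exp (t * L a)
      ≤ (S.erase A).card * (ε * Real.exp (t * L A)) := by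
    calc _ ≤ ∑ _a ∈ S.erase A, ε * Real.exp (t * L A) := Finset.sum_le_sum hterm
    _ = _ := by rw [Finset.sum_const, nsmul_eq_mul]
  have hcard : ((S.erase A).card : ℝ) < S.card := by
    exact_mod_cast Finset.card_erase_lt_of_mem hA
  have hmul : (S.card : ℝ) * ε = cA := by
    rw [hεdef, mul_div_cancel₀]
    exact Nat.cast_ne_zero.mpr hS.card_pos.ne'
  have hfinal : ((S.erase A).card : ℝ) * (ε * Real.exp (t * L A)) < cA * Real.exp (t * L A) := by
    calc ((S.erase A).card : ℝ) * (ε * Real.exp (t * L A))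
        < (S.card : ℝ) * (ε * Real.exp (t * L A)) :=
          mul_lt_mul_of_pos_right hcard (by positivity)
    _ = cA * Real.exp (t * L A) := by rw [← mul_assoc, hmul]
  exact absurd (hkey.trans (hsum.trans hfinal.le)) (not_le.mpr (hkey.trans_lt (hsum.trans_lt hfinal))).elim


/-- The amoeba of a nonzero polynomial is closed and has nonempty complement. -/
theorem amoeba_isClosed_and_compl_nonempty {n : ℕ} (f : MvPolynomial (Fin n) ℂ)
    (hf : f ≠ 0) :
    IsClosed (amoeba f) ∧ (amoeba f)ᶜ.Nonempty :=
  ⟨amoeba_isClosed f, amoeba_compl_nonempty f hf⟩
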